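/- Let k ≥ 3 and let F be a k-critical graph on f vertices. There exists a constant γ_F > 0 depending only on F such that the following holds for all sufficiently large n: if x₁, …, x_{k−1} are nonnegative integers with Σ_{i=1}^{k−1} x_i = n, and ⌊n/(k−1)⌋ − d ≤ x_i ≤ ⌈n/(k−1)⌉ + d for all i ∈ [k−1] where d ≤ n/(3(k−1)), then c(x₁, …, x_{k−1}, F) ≥ c(n,F) − γ_F·d·n^{f−3}. -/

import Mathlib

open Finset SimpleGraph

/-- Number of `k`-cliques of a graph. -/
noncomputable def cliqueCount {V : Type*} (G : SimpleGraph V) (k : ℕ) : ℕ :=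
  Nat.card {T : Finset V // G.IsNClique k T}

/-- `K_k`-covering number: minimum size of a vertex set meeting every `k`-clique. -/
noncomputable def cliqueCover {V : Type*} [Fintype V] [DecidableEq V]
    (G : SimpleGraph V) (k : ℕ) : ℕ :=
  sInf {m | ∃ S : Finset V, S.card = m ∧ ∀ T : Finset V, G.IsNClique k T → ∃ v ∈ T, v ∈ S}

/-- Number of edges of a graph. -/
noncomputable def edgeCount {V : Type*} (G : SimpleGraph V) : ℕ := Nat.card G.edgeSet

/-- Number of edges of the Turán graph `T_r(n)`. -/
noncomputable def turanEdges (r n : ℕ) : ℕ := edgeCount (turanGraph n r)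

/-- `e(n) = n² - 4⌊n²/4⌋`. -/
def eDef (n : ℕ) : ℕ := n ^ 2 - 4 * (n ^ 2 / 4)

/-- `m_{s,t}(n)`: least `m` such that `4s - 4t - 4m + e(n)` is a perfect square. -/
noncomputable def mst (s t n : ℕ) : ℕ :=
  sInf {m : ℕ | ∃ p : ℕ, (p : ℤ) ^ 2 = 4 * s - 4 * t - 4 * m + eDef n}

/-- `R₃(n,s,t) = (4s - 4t - 4m_{s,t}(n) + e(n))^{1/2}`. -/
noncomputable def R3 (s t n : ℕ) : ℕ :=
  Nat.sqrt (4 * (s : ℤ) - 4 * t - 4 * mst s t n + eDef n).toNat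

/-- Number of copies of `F` in `G`: subgraphs of `G` isomorphic to `F`. -/
noncomputable def copyCount {α V : Type*} (F : SimpleGraph α) (G : SimpleGraph V) : ℕ :=
  Nat.card {H : G.Subgraph // Nonempty (F ≃g H.coe)}

/-- `F`-covering number of `G`. -/
noncomputable def coverNumber {α V : Type*} [Fintype V] [DecidableEq V]
    (F : SimpleGraph α) (G : SimpleGraph V) : ℕ :=
  sInf {m | ∃ S : Finset V, S.card = m ∧
    ∀ H : G.Subgraph, Nonempty (F ≃g H.coe) → ∃ v ∈ H.verts, v ∈ S}

/-- A graph `F` is `k`-critical. -/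
def IsCritical {α : Type*} (k : ℕ) (F : SimpleGraph α) : Prop :=
  F.chromaticNumber = k ∧ ∃ e ∈ F.edgeSet, (F.deleteEdges {e}).chromaticNumber < k

/-- `c(n,F)`: minimum number of copies of `F` after adding one new edge to `T_{k-1}(n)`. -/
noncomputable def cnF {α : Type*} (k n : ℕ) (F : SimpleGraph α) : ℕ :=
  sInf {c | ∃ u v : Fin n, u ≠ v ∧ ¬ (turanGraph n (k - 1)).Adj u v ∧
    c = copyCount F (turanGraph n (k - 1) ⊔ fromEdgeSet {s(u, v)})}

/-- `N_k(n,s)` from Theorem 1.3. -/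
def NkBound (k s n : ℕ) : ℕ :=
  if n % (k - 1) = 0 then s * (n / (k - 1)) ^ (k - 3) * (n / (k - 1) - 1)
  else if n % (k - 1) = 1 then s * (n / (k - 1)) ^ (k - 2) - (n / (k - 1)) ^ (k - 3)
  else s * (n / (k - 1) + 1) ^ (n % (k - 1) - 2) * (n / (k - 1)) ^ (k - n % (k - 1))

/-- `R_k(n,s,t)`. -/
noncomputable def Rk (k s t n : ℕ) : ℝ :=
  Real.sqrt ((2 * ((k : ℝ) - 1) * ((s : ℝ) - t) +
    ((k : ℝ) - 1 - (n % (k - 1) : ℕ)) * (n % (k - 1) : ℕ)) / ((k : ℝ) - 2))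

/-- `c(x₁,…,x_{k-1},F)`: copies of `F` in the complete multipartite graph with parts
`Fin (x i)` plus one edge inside part `0`. -/
noncomputable def cParts {α : Type*} (k : ℕ) (x : Fin (k - 1) → ℕ) (F : SimpleGraph α) : ℕ :=
  sInf {c | ∃ i₀ : Fin (k - 1), ∃ a b : Fin (x i₀), (i₀ : ℕ) = 0 ∧ a ≠ b ∧
    c = copyCount F (completeMultipartiteGraph (fun i => Fin (x i)) ⊔
      fromEdgeSet {s(⟨i₀, a⟩, ⟨i₀, b⟩)})}

section AuxStmt12

variable {α V W : Type*}

private lemma subgraphFinite {V : Type*} [Finite V] (G : SimpleGraph V) :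
    Finite G.Subgraph :=
  Finite.of_injective (fun H => (H.verts, H.Adj)) (by
    intro H1 H2 h
    simp only [Prod.mk.injEq] at h
    exact SimpleGraph.Subgraph.ext h.1 h.2)

private def isoSub {G : SimpleGraph V} {G' : SimpleGraph W} (e : G ≃g G') (H : G.Subgraph) :
    G'.Subgraph where
  verts := (e : V → W) '' H.verts
  Adj u v := H.Adj (e.symm u) (e.symm v)
  adj_sub h := e.symm.map_adj_iff.mp (H.adj_sub h)
  edge_vert h := ⟨_, H.edge_vert h, by simp⟩
  symm := ⟨fun u v h => H.adj_symm h⟩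

private def isoSubEquiv {G : SimpleGraph V} {G' : SimpleGraph W} (e : G ≃g G') :
    G.Subgraph ≃ G'.Subgraph where
  toFun := isoSub e
  invFun := isoSub e.symm
  left_inv H := by
    apply SimpleGraph.Subgraph.ext
    · simp [isoSub, Set.image_image]
    · ext u v
      simp [isoSub]
  right_inv H := by
    apply SimpleGraph.Subgraph.ext
    · simp [isoSub, Set.image_image]
    · ext u v
      simp [isoSub]

private def isoSubCoe {G : SimpleGraph V} {G' : SimpleGraph W} (e : G ≃g G') (H : G.Subgraph) :
    H.coe ≃g (isoSub e H).coe where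
  toEquiv := Equiv.subtypeEquiv e.toEquiv (fun v => by
    constructor
    · intro h; exact ⟨v, h, rfl⟩
    · rintro ⟨w, hw, hew⟩
      have : w = v := e.toEquiv.injective hew
      rwa [← this])
  map_rel_iff' := by
    intro x y
    simp only [isoSub, SimpleGraph.Subgraph.coe_adj, Equiv.subtypeEquiv_apply]
    erw [RelIso.symm_apply_apply, RelIso.symm_apply_apply]

private lemma copyCount_iso {F : SimpleGraph α} {G : SimpleGraph V} {G' : SimpleGraph W}
    (e : G ≃g G') : copyCount F G = copyCount F G' := by
  refine Nat.card_congr (Equiv.subtypeEquiv (isoSubEquiv e) fun H => ?_)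
  constructor
  · rintro ⟨φ⟩; exact ⟨φ.trans (isoSubCoe e H)⟩
  · rintro ⟨φ⟩; exact ⟨φ.trans (isoSubCoe e H).symm⟩

private lemma nat_card_split {β : Type*} [Finite β] (P Q : β → Prop) :
    Nat.card {x // P x} = Nat.card {x : β // P x ∧ Q x} + Nat.card {x : β // P x ∧ ¬Q x} := by
  classical
  rw [← Nat.card_sum]
  refine Nat.card_congr ?_
  exact ((Equiv.sumCompl (fun x : {x // P x} => Q x.1)).symm.trans
    (Equiv.sumCongr (Equiv.subtypeSubtypeEquivSubtypeInter P Q)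
      (Equiv.subtypeSubtypeEquivSubtypeInter P (fun x => ¬ Q x))))

end AuxStmt12

section Core

variable {α : Type*} [Fintype α] {F : SimpleGraph α} {k f : ℕ}

private def grG {k : ℕ} {n : ℕ} (c : Fin n → Fin (k-1)) (a b : Fin n) : SimpleGraph (Fin n) :=
  SimpleGraph.comap c ⊤ ⊔ fromEdgeSet {s(a, b)}

private lemma grG_adj {n : ℕ} (c : Fin n → Fin (k-1)) (a b u v : Fin n) :
    (grG c a b).Adj u v ↔ (c u ≠ c v) ∨ (s(u, v) = s(a, b) ∧ u ≠ v) := by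
  simp [grG, SimpleGraph.fromEdgeSet_adj]

private lemma copy_adj_ab (hχ : F.chromaticNumber = (k : ℕ∞)) (hk : 3 ≤ k) {n : ℕ}
    {c : Fin n → Fin (k-1)} {a b : Fin n} (hcab : c a = c b)
    (H : (grG c a b).Subgraph) (hiso : Nonempty (F ≃g H.coe)) : H.Adj a b := by
  by_contra hnadj
  have col : H.coe.Coloring (Fin (k-1)) := by
    refine SimpleGraph.Coloring.mk (fun w => c w.1) ?_
    intro x y hxy hcxy
    have h1 : H.Adj x.1 y.1 := hxy
    rcases (grG_adj c a b x.1 y.1).mp (H.adj_sub h1) with h | ⟨hs, hne⟩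
    · exact h hcxy
    · rcases Sym2.eq_iff.mp hs with ⟨hxa, hyb⟩ | ⟨hxb, hya⟩
      · rw [hxa, hyb] at h1; exact hnadj h1
      · rw [hxb, hya] at h1; exact hnadj (H.adj_symm h1)
  obtain ⟨φ⟩ := hiso
  have hcol : F.Colorable (k-1) := ⟨col.comp φ.toHom⟩
  have h2 := hcol.chromaticNumber_le
  rw [hχ] at h2
  have h3 := Nat.cast_le.mp h2
  omega

private lemma copy_verts_card (hf : Fintype.card α = f) {V' : Type*} {G : SimpleGraph V'}
    (H : G.Subgraph) (φ : F ≃g H.coe) : Nat.card H.verts = f := by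
  rw [← hf, ← Nat.card_eq_fintype_card]
  exact (Nat.card_congr φ.toEquiv).symm

private lemma card_through (hχ : F.chromaticNumber = (k : ℕ∞)) (hk : 3 ≤ k)
    (hf : Fintype.card α = f) {n : ℕ}
    {c : Fin n → Fin (k-1)} {a b w : Fin n} (hab : a ≠ b) (hcab : c a = c b)
    (hwa : w ≠ a) (hwb : w ≠ b) :
    Nat.card {H : (grG c a b).Subgraph // Nonempty (F ≃g H.coe) ∧ w ∈ H.verts}
      ≤ 2 ^ (f * f) * n ^ (f - 3) := by
  classical
  have := subgraphFinite (grG c a b)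
  -- basic facts about elements of the domain
  set S : (grG c a b).Subgraph → Finset (Fin n) := fun H => H.verts.toFinite.toFinset with hS
  have hSmem : ∀ (H : (grG c a b).Subgraph) (v : Fin n), v ∈ S H ↔ v ∈ H.verts := by
    intro H v; exact Set.Finite.mem_toFinset _
  have hprops : ∀ (H : (grG c a b).Subgraph), (Nonempty (F ≃g H.coe) ∧ w ∈ H.verts) →
      a ∈ S H ∧ b ∈ S H ∧ w ∈ S H ∧ (S H).card = f := by
    intro H hH
    have hadj := copy_adj_ab hχ hk hcab H hH.1
    have ha : a ∈ H.verts := H.edge_vert hadj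
    have hb : b ∈ H.verts := H.edge_vert (H.adj_symm hadj)
    obtain ⟨φ⟩ := hH.1
    have hcard : (S H).card = f := by
      have h1 := copy_verts_card hf H φ
      rw [Nat.card_coe_set_eq, Set.ncard_eq_toFinset_card _ H.verts.toFinite] at h1
      exact h1
    exact ⟨(hSmem H a).mpr ha, (hSmem H b).mpr hb, (hSmem H w).mpr hH.2, hcard⟩
  have hcard3 : ∀ (H : (grG c a b).Subgraph), (Nonempty (F ≃g H.coe) ∧ w ∈ H.verts) →
      ((((S H).erase a).erase b).erase w).card = f - 3 := by
    intro H hH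
    obtain ⟨ha, hb, hw, hcard⟩ := hprops H hH
    rw [Finset.card_erase_of_mem (by simp [Finset.mem_erase, hwa, hwb, hw]),
      Finset.card_erase_of_mem (by simp [Finset.mem_erase, hab.symm, hb]),
      Finset.card_erase_of_mem ha, hcard]
    omega
  set Ψ : {H : (grG c a b).Subgraph // Nonempty (F ≃g H.coe) ∧ w ∈ H.verts} →
      ({T : Finset (Fin n) // T.card = f - 3} × (Fin f → Fin f → Bool)) :=
    fun X => (⟨(((S X.1).erase a).erase b).erase w, hcard3 X.1 X.2⟩,
      fun i j => if h : (S X.1).card = f then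
          (if X.1.Adj ((S X.1).orderIsoOfFin h i : Fin n) ((S X.1).orderIsoOfFin h j : Fin n)
            then true else false)
        else false) with hΨ
  have ordeq : ∀ (S1 S2 : Finset (Fin n)) (h1 : S1.card = f) (h2 : S2.card = f), S1 = S2 →
      ∀ i, ((S1.orderIsoOfFin h1 i : Fin n)) = (S2.orderIsoOfFin h2 i : Fin n) := by
    rintro S1 S2 h1 h2 rfl i; rfl
  have hinj : Function.Injective Ψ := by
    intro X Y hXY
    obtain ⟨haX, hbX, hwX, hcX⟩ := hprops X.1 X.2
    obtain ⟨haY, hbY, hwY, hcY⟩ := hprops Y.1 Y.2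
    have h1 : (((S X.1).erase a).erase b).erase w = (((S Y.1).erase a).erase b).erase w :=
      congrArg (fun p => p.1.1) hXY
    have h2 : (fun i j => if h : (S X.1).card = f then
          (if X.1.Adj ((S X.1).orderIsoOfFin h i : Fin n) ((S X.1).orderIsoOfFin h j : Fin n)
            then true else false) else false)
        = (fun i j => if h : (S Y.1).card = f then
          (if Y.1.Adj ((S Y.1).orderIsoOfFin h i : Fin n) ((S Y.1).orderIsoOfFin h j : Fin n)
            then true else false) else false) :=
      congrArg Prod.snd hXY
    have hSeq : S X.1 = S Y.1 := by
      ext v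
      by_cases hva : v = a
      · subst hva; simp [haX, haY]
      · by_cases hvb : v = b
        · subst hvb; simp [hbX, hbY]
        · by_cases hvw : v = w
          · subst hvw; simp [hwX, hwY]
          · constructor
            · intro hv
              have : v ∈ (((S X.1).erase a).erase b).erase w := by
                simp [Finset.mem_erase, hva, hvb, hvw, hv]
              rw [h1] at this
              exact (Finset.mem_erase.mp (Finset.mem_erase.mp
                (Finset.mem_erase.mp this).2).2).2
            · intro hv
              have : v ∈ (((S Y.1).erase a).erase b).erase w := by
                simp [Finset.mem_erase, hva, hvb, hvw, hv]
              rw [← h1] at this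
              exact (Finset.mem_erase.mp (Finset.mem_erase.mp
                (Finset.mem_erase.mp this).2).2).2
    have hverts : X.1.verts = Y.1.verts := by
      have := congrArg (fun (T : Finset (Fin n)) => (T : Set (Fin n))) hSeq
      simpa [hS, Set.Finite.coe_toFinset] using this
    have hAdjeq : ∀ u v, X.1.Adj u v ↔ Y.1.Adj u v := by
      intro u v
      by_cases hu : u ∈ X.1.verts
      · by_cases hv : v ∈ X.1.verts
        · obtain ⟨i, hi⟩ := ((S X.1).orderIsoOfFin hcX).surjective ⟨u, (hSmem _ u).mpr hu⟩
          obtain ⟨j, hj⟩ := ((S X.1).orderIsoOfFin hcX).surjective ⟨v, (hSmem _ v).mpr hv⟩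
          have hu' : ((S X.1).orderIsoOfFin hcX i : Fin n) = u := congrArg Subtype.val hi
          have hv' : ((S X.1).orderIsoOfFin hcX j : Fin n) = v := congrArg Subtype.val hj
          have e1 : ((S Y.1).orderIsoOfFin hcY i : Fin n) = u :=
            (ordeq _ _ hcX hcY hSeq i).symm.trans hu'
          have e2 : ((S Y.1).orderIsoOfFin hcY j : Fin n) = v :=
            (ordeq _ _ hcX hcY hSeq j).symm.trans hv'
          have hthis := congrFun (congrFun h2 i) j
          rw [dif_pos hcX, dif_pos hcY, hu', hv', e1, e2] at hthis
          by_cases hA : X.1.Adj u v <;> by_cases hB : Y.1.Adj u v <;>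
            simp [hA, hB] at hthis ⊢
        · constructor
          · intro h; exact absurd (X.1.edge_vert (X.1.adj_symm h)) hv
          · intro h; exact absurd (Y.1.edge_vert (Y.1.adj_symm h)) (hverts ▸ hv)
      · constructor
        · intro h; exact absurd (X.1.edge_vert h) hu
        · intro h; exact absurd (Y.1.edge_vert h) (hverts ▸ hu)
    have : X.1 = Y.1 := SimpleGraph.Subgraph.ext hverts (by
      funext u v; exact propext (hAdjeq u v))
    exact Subtype.ext this
  have hle := Nat.card_le_card_of_injective Ψ hinj
  have hT : Nat.card ({T : Finset (Fin n) // T.card = f - 3} × (Fin f → Fin f → Bool))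
      = (n.choose (f-3)) * 2 ^ (f * f) := by
    rw [Nat.card_prod, Nat.card_eq_fintype_card, Nat.card_eq_fintype_card,
      Fintype.card_finset_len, Fintype.card_fin]
    congr 1
    rw [Fintype.card_fun, Fintype.card_fun, Fintype.card_bool, Fintype.card_fin, ← pow_mul]
  calc Nat.card {H : (grG c a b).Subgraph // Nonempty (F ≃g H.coe) ∧ w ∈ H.verts}
      ≤ Nat.card ({T : Finset (Fin n) // T.card = f - 3} × (Fin f → Fin f → Bool)) := hle
    _ = n.choose (f-3) * 2 ^ (f*f) := hT
    _ ≤ n ^ (f-3) * 2 ^ (f*f) := Nat.mul_le_mul_right _ (Nat.choose_le_pow n (f-3))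
    _ = 2 ^ (f*f) * n ^ (f-3) := Nat.mul_comm _ _

private lemma onestep (hχ : F.chromaticNumber = (k : ℕ∞)) (hk : 3 ≤ k)
    (hf : Fintype.card α = f) {n : ℕ} {c : Fin n → Fin (k-1)} {a b : Fin n}
    (hab : a ≠ b) (hcab : c a = c b)
    (w : Fin n) (hwa : w ≠ a) (hwb : w ≠ b) (j : Fin (k-1)) :
    _root_.copyCount F (grG (Function.update c w j) a b) ≤
      _root_.copyCount F (grG c a b) + 2 ^ (f * f) * n ^ (f - 3) := by
  classical
  have hfin1 := subgraphFinite (grG (Function.update c w j) a b)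
  have hfin2 := subgraphFinite (grG c a b)
  set c' := Function.update c w j with hc'
  have hc'a : c' a = c a := Function.update_of_ne (Ne.symm hwa) _ _
  have hc'b : c' b = c b := Function.update_of_ne (Ne.symm hwb) _ _
  have hc'ab : c' a = c' b := by rw [hc'a, hc'b, hcab]
  have split := nat_card_split (fun H : (grG c' a b).Subgraph => Nonempty (F ≃g H.coe))
      (fun H => w ∈ H.verts)
  have h1 : Nat.card {H : (grG c' a b).Subgraph // Nonempty (F ≃g H.coe) ∧ w ∈ H.verts}
      ≤ 2 ^ (f*f) * n ^ (f-3) := card_through hχ hk hf hab hc'ab hwa hwb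
  have h2 : Nat.card {H : (grG c' a b).Subgraph // Nonempty (F ≃g H.coe) ∧ w ∉ H.verts}
      ≤ _root_.copyCount F (grG c a b) := by
    rw [_root_.copyCount]
    have hmap : ∀ (X : {H : (grG c' a b).Subgraph // Nonempty (F ≃g H.coe) ∧ w ∉ H.verts}),
        ∀ {u v : Fin n}, X.1.Adj u v → (grG c a b).Adj u v := by
      intro X u v huv
      have hu : u ∈ X.1.verts := X.1.edge_vert huv
      have hv : v ∈ X.1.verts := X.1.edge_vert (X.1.adj_symm huv)
      have hu' : u ≠ w := fun h => X.2.2 (h ▸ hu)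
      have hv' : v ≠ w := fun h => X.2.2 (h ▸ hv)
      have hGadj := X.1.adj_sub huv
      rw [grG_adj] at hGadj ⊢
      rcases hGadj with h | h
      · left; rwa [hc', Function.update_of_ne hu', Function.update_of_ne hv'] at h
      · right; exact h
    set Φ : {H : (grG c' a b).Subgraph // Nonempty (F ≃g H.coe) ∧ w ∉ H.verts} →
        {H : (grG c a b).Subgraph // Nonempty (F ≃g H.coe)} := fun X =>
      ⟨{ verts := X.1.verts, Adj := X.1.Adj, adj_sub := hmap X, edge_vert := X.1.edge_vert,
         symm := X.1.symm }, X.2.1⟩ with hΦ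
    refine Nat.card_le_card_of_injective Φ ?_
    intro X Y h
    apply Subtype.ext
    apply SimpleGraph.Subgraph.ext
    · exact congrArg (fun Z => Z.1.verts) h
    · exact congrArg (fun Z => Z.1.Adj) h
  have hcc : _root_.copyCount F (grG c' a b)
      = Nat.card {H : (grG c' a b).Subgraph // Nonempty (F ≃g H.coe) ∧ w ∈ H.verts}
        + Nat.card {H : (grG c' a b).Subgraph // Nonempty (F ≃g H.coe) ∧ w ∉ H.verts} := split
  rw [hcc]
  omega

private lemma steps (hχ : F.chromaticNumber = (k : ℕ∞)) (hk : 3 ≤ k)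
    (hf : Fintype.card α = f) {n : ℕ} {a b : Fin n} (hab : a ≠ b) :
    ∀ s : Finset (Fin n), a ∉ s → b ∉ s →
      ∀ c c' : Fin n → Fin (k-1), c a = c b → (∀ v, v ∉ s → c v = c' v) →
      _root_.copyCount F (grG c' a b) ≤ _root_.copyCount F (grG c a b) + s.card * (2 ^ (f*f) * n ^ (f-3)) := by
  intro s
  induction s using Finset.induction_on with
  | empty =>
    intro _ _ c c' hcab hagree
    have : c = c' := funext fun v => hagree v (Finset.notMem_empty v)
    rw [← this]; simp
  | @insert w t hwt ih =>
    intro ha hb c c' hcab hagree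
    have hwa : w ≠ a := fun h => ha (h ▸ Finset.mem_insert_self w t)
    have hwb : w ≠ b := fun h => hb (h ▸ Finset.mem_insert_self w t)
    have hat : a ∉ t := fun h => ha (Finset.mem_insert_of_mem h)
    have hbt : b ∉ t := fun h => hb (Finset.mem_insert_of_mem h)
    have hans : a ∉ insert w t := ha
    have hbns : b ∉ insert w t := hb
    set cm := Function.update c' w (c w) with hcm
    have hagree' : ∀ v, v ∉ t → c v = cm v := by
      intro v hv
      by_cases hvw : v = w
      · subst hvw; rw [hcm, Function.update_self]
      · rw [hcm, Function.update_of_ne hvw]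
        exact hagree v (by simp [Finset.mem_insert, hvw, hv])
    have h1 := ih hat hbt c cm hcab hagree'
    have hcma : cm a = cm b := by
      rw [hcm, Function.update_of_ne (Ne.symm hwa), Function.update_of_ne (Ne.symm hwb)]
      rw [← hagree a hans, ← hagree b hbns]
      exact hcab
    have hupd : c' = Function.update cm w (c' w) := by
      funext v
      by_cases hvw : v = w
      · subst hvw; rw [Function.update_self]
      · rw [Function.update_of_ne hvw, hcm, Function.update_of_ne hvw]
    have h2 : _root_.copyCount F (grG c' a b) ≤ _root_.copyCount F (grG cm a b) + 2^(f*f) * n^(f-3) := by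
      conv_lhs => rw [hupd]
      exact onestep hχ hk hf hab hcma w hwa hwb (c' w)
    rw [Finset.card_insert_of_notMem hwt]
    calc _root_.copyCount F (grG c' a b) ≤ _root_.copyCount F (grG cm a b) + 2^(f*f) * n^(f-3) := h2
      _ ≤ (_root_.copyCount F (grG c a b) + t.card * (2^(f*f) * n^(f-3))) + 2^(f*f) * n^(f-3) :=
          Nat.add_le_add_right h1 _
      _ = _root_.copyCount F (grG c a b) + (t.card + 1) * (2^(f*f) * n^(f-3)) := by ring

private lemma exists_coloring {V C : Type*} [Fintype V] [Fintype C] [DecidableEq V]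
    [DecidableEq C] (P : Finset V) (y : C → ℕ) :
    ∀ (m : ℕ) (c₀ : V → C),
      (∑ j, y j = Fintype.card V) →
      (∀ j, ((P.filter (fun v => c₀ v = j)).card ≤ y j)) →
      (∑ j, (y j - (univ.filter (fun v => c₀ v = j)).card)) = m →
      ∃ c : V → C, (∀ j, (univ.filter (fun v => c v = j)).card = y j) ∧
        (∀ v ∈ P, c v = c₀ v) ∧ (univ.filter (fun v => c v ≠ c₀ v)).card ≤ m := by
  intro m
  induction m with
  | zero =>
    intro c₀ hy hP hm
    have ht : ∑ j, (univ.filter (fun v => c₀ v = j)).card = Fintype.card V := by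
      rw [← Finset.card_univ]
      exact (Finset.card_eq_sum_card_fiberwise (fun x _ => Finset.mem_univ (c₀ x))).symm
    have hle : ∀ j, y j ≤ (univ.filter (fun v => c₀ v = j)).card := by
      intro j
      by_contra hlt
      push_neg at hlt
      have hpos : 0 < y j - (univ.filter (fun v => c₀ v = j)).card := by omega
      have : 0 < ∑ j, (y j - (univ.filter (fun v => c₀ v = j)).card) :=
        Finset.sum_pos' (fun i _ => Nat.zero_le _) ⟨j, Finset.mem_univ j, hpos⟩
      omega
    have heq : ∀ j, (univ.filter (fun v => c₀ v = j)).card = y j := by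
      by_contra hne
      push_neg at hne
      obtain ⟨j, hj⟩ := hne
      have h1 : y j < (univ.filter (fun v => c₀ v = j)).card :=
        lt_of_le_of_ne (hle j) (Ne.symm hj)
      have : ∑ j, y j < ∑ j, (univ.filter (fun v => c₀ v = j)).card :=
        Finset.sum_lt_sum (fun i _ => hle i) ⟨j, Finset.mem_univ j, h1⟩
      omega
    refine ⟨c₀, heq, fun v _ => rfl, ?_⟩
    simp
  | succ m ih =>
    intro c₀ hy hP hm
    classical
    have ht : ∑ j, (univ.filter (fun v => c₀ v = j)).card = Fintype.card V := by
      rw [← Finset.card_univ]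
      exact (Finset.card_eq_sum_card_fiberwise (fun x _ => Finset.mem_univ (c₀ x))).symm
    have hjp : ∃ jp, (univ.filter (fun v => c₀ v = jp)).card < y jp := by
      by_contra h
      push_neg at h
      have : ∑ j, (y j - (univ.filter (fun v => c₀ v = j)).card) = 0 :=
        Finset.sum_eq_zero (fun j _ => by have := h j; omega)
      omega
    obtain ⟨jp, hjp⟩ := hjp
    have hjm : ∃ jm, y jm < (univ.filter (fun v => c₀ v = jm)).card := by
      by_contra h
      push_neg at h
      have : ∑ j, (univ.filter (fun v => c₀ v = j)).card < ∑ j, y j :=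
        Finset.sum_lt_sum (fun i _ => h i) ⟨jp, Finset.mem_univ _, hjp⟩
      omega
    obtain ⟨jm, hjm⟩ := hjm
    have hne : jp ≠ jm := by
      intro h
      rw [h] at hjp
      omega
    have hv : ∃ v ∈ univ.filter (fun v => c₀ v = jm), v ∉ P := by
      have hsub : ¬ (univ.filter (fun v => c₀ v = jm) ⊆ P.filter (fun v => c₀ v = jm)) := by
        intro hsub
        have h1 := Finset.card_le_card hsub
        have h2 := hP jm
        omega
      obtain ⟨v, hv1, hv2⟩ := Finset.not_subset.mp hsub
      refine ⟨v, hv1, fun hvP => hv2 ?_⟩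
      exact Finset.mem_filter.mpr ⟨hvP, (Finset.mem_filter.mp hv1).2⟩
    obtain ⟨v, hvmem, hvP⟩ := hv
    have hcv : c₀ v = jm := (Finset.mem_filter.mp hvmem).2
    set c₁ := Function.update c₀ v jp with hc₁
    have hupdne : ∀ w, w ≠ v → c₁ w = c₀ w := fun w hw => Function.update_of_ne hw _ _
    have hfib : ∀ j, univ.filter (fun w => c₁ w = j) =
        if j = jp then insert v ((univ.filter (fun w => c₀ w = j)).erase v)
        else (univ.filter (fun w => c₀ w = j)).erase v := by
      intro j
      ext w
      by_cases hw : w = v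
      · subst hw
        by_cases hj : j = jp <;>
          simp [hc₁, Function.update_self, hj, hcv, hne, Finset.mem_erase, eq_comm]
      · by_cases hj : j = jp <;>
          simp [hc₁, Function.update_of_ne hw, hj, Finset.mem_erase, hw]
    have hvnotp : v ∉ univ.filter (fun w => c₀ w = jp) := by
      simp only [Finset.mem_filter, Finset.mem_univ, true_and, hcv]
      intro h
      exact hne h.symm
    have ht1p : (univ.filter (fun w => c₁ w = jp)).card
        = (univ.filter (fun w => c₀ w = jp)).card + 1 := by
      rw [hfib jp, if_pos rfl, Finset.erase_eq_of_notMem hvnotp,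
        Finset.card_insert_of_notMem hvnotp]
    have ht1 : ∀ j, j ≠ jp →
        (univ.filter (fun w => c₁ w = j)).card
          = (univ.filter (fun w => c₀ w = j)).card - (if j = jm then 1 else 0) := by
      intro j hj
      rw [hfib j, if_neg hj]
      by_cases hjm' : j = jm
      · subst hjm'
        rw [Finset.card_erase_of_mem (by simp [hcv]), if_pos rfl]
      · rw [Finset.erase_eq_of_notMem (by
            simp only [Finset.mem_filter, Finset.mem_univ, true_and, hcv]
            exact fun h => hjm' h.symm), if_neg hjm']
        simp
    have hsum1 : ∑ j, (y j - (univ.filter (fun w => c₁ w = j)).card) = m := by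
      have hrest : ∑ j ∈ univ.erase jp, (y j - (univ.filter (fun w => c₁ w = j)).card)
          = ∑ j ∈ univ.erase jp, (y j - (univ.filter (fun w => c₀ w = j)).card) := by
        refine Finset.sum_congr rfl (fun j hj => ?_)
        have hjne : j ≠ jp := (Finset.mem_erase.mp hj).1
        rw [ht1 j hjne]
        by_cases hjm' : j = jm
        · subst hjm'
          rw [if_pos rfl]
          omega
        · rw [if_neg hjm']
          omega
      have hnew := Finset.add_sum_erase univ
        (fun j => (y j - (univ.filter (fun w => c₁ w = j)).card)) (Finset.mem_univ jp)
      have hold := Finset.add_sum_erase univ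
        (fun j => (y j - (univ.filter (fun w => c₀ w = j)).card)) (Finset.mem_univ jp)
      omega
    have hP1 : ∀ j, ((P.filter (fun w => c₁ w = j)).card ≤ y j) := by
      intro j
      have heq : P.filter (fun w => c₁ w = j) = P.filter (fun w => c₀ w = j) := by
        refine Finset.filter_congr (fun w hw => ?_)
        have hwv : w ≠ v := fun h => hvP (h ▸ hw)
        rw [hc₁, Function.update_of_ne hwv]
      rw [heq]
      exact hP j
    obtain ⟨c, hcfib, hcP, hcdiff⟩ := ih c₁ hy hP1 hsum1
    refine ⟨c, hcfib, ?_, ?_⟩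
    · intro w hw
      rw [hcP w hw]
      exact hupdne w (fun h => hvP (h ▸ hw))
    · have hsub : univ.filter (fun w => c w ≠ c₀ w)
          ⊆ insert v (univ.filter (fun w => c w ≠ c₁ w)) := by
        intro w hw
        simp only [Finset.mem_filter, Finset.mem_insert, Finset.mem_univ, true_and] at hw ⊢
        by_cases hwv : w = v
        · left; exact hwv
        · right
          intro heq
          exact hw (heq.trans (hupdne w hwv))
      calc (univ.filter (fun w => c w ≠ c₀ w)).card
          ≤ (insert v (univ.filter (fun w => c w ≠ c₁ w))).card := Finset.card_le_card hsub
        _ ≤ (univ.filter (fun w => c w ≠ c₁ w)).card + 1 := Finset.card_insert_le _ _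
        _ ≤ m + 1 := by omega

private lemma exists_perm {m : ℕ} (u t : Fin m → ℕ) (fl : ℕ)
    (hu : ∀ i, fl ≤ u i ∧ u i ≤ fl + 1) (ht : ∀ i, fl ≤ t i ∧ t i ≤ fl + 1)
    (hsum : ∑ i, u i = ∑ i, t i) : ∃ π : Equiv.Perm (Fin m), ∀ i, t (π i) = u i := by
  classical
  set A := univ.filter (fun i => u i = fl + 1) with hA
  set B := univ.filter (fun i => t i = fl + 1) with hB
  have hcards : ∀ (w : Fin m → ℕ), (∀ i, fl ≤ w i ∧ w i ≤ fl + 1) →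
      ∑ i, w i = m * fl + (univ.filter (fun i => w i = fl + 1)).card := by
    intro w hw
    have hpt : ∀ i ∈ univ, w i = fl + (if w i = fl + 1 then 1 else 0) := fun i _ => by
      have := hw i; split_ifs <;> omega
    rw [Finset.sum_congr rfl hpt, Finset.sum_add_distrib, Finset.sum_const,
      Finset.card_univ, Fintype.card_fin, smul_eq_mul, ← Finset.card_filter]
  have hAB : A.card = B.card := by
    have h1 := hcards u hu
    have h2 := hcards t ht
    rw [hsum] at h1
    rw [h2] at h1
    exact (Nat.add_left_cancel h1).symm
  have hABc : Aᶜ.card = Bᶜ.card := by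
    rw [Finset.card_compl, Finset.card_compl, hAB]
  let eA : {i // i ∈ A} ≃ {i // i ∈ B} := Finset.equivOfCardEq hAB
  let eC : {i // i ∈ Aᶜ} ≃ {i // i ∈ Bᶜ} := Finset.equivOfCardEq hABc
  let eA' : {i // ¬ i ∈ A} ≃ {i // ¬ i ∈ B} :=
    ((Equiv.subtypeEquivRight (fun i => (Finset.mem_compl (s := A)).symm)).trans eC).trans
      (Equiv.subtypeEquivRight (fun i => Finset.mem_compl (s := B)))
  set π : Equiv.Perm (Fin m) :=
    ((Equiv.sumCompl (fun i => i ∈ A)).symm.trans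
      ((Equiv.sumCongr eA eA').trans (Equiv.sumCompl (fun i => i ∈ B)))) with hπ
  have hmem : ∀ i, i ∈ A → π i ∈ B := by
    intro i hi
    rw [hπ]
    simp only [Equiv.trans_apply]
    rw [Equiv.sumCompl_symm_apply_of_pos hi]
    simp only [Equiv.sumCongr_apply, Sum.map_inl, Equiv.sumCompl_apply_inl]
    exact (eA ⟨i, hi⟩).2
  have hnmem : ∀ i, i ∉ A → π i ∉ B := by
    intro i hi
    rw [hπ]
    simp only [Equiv.trans_apply]
    rw [Equiv.sumCompl_symm_apply_of_neg hi]
    simp only [Equiv.sumCongr_apply, Sum.map_inr, Equiv.sumCompl_apply_inr]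
    exact (eA' ⟨i, hi⟩).2
  refine ⟨π, fun i => ?_⟩
  by_cases hi : i ∈ A
  · have h1 := hmem i hi
    rw [hB] at h1
    rw [hA] at hi
    simp only [Finset.mem_filter, Finset.mem_univ, true_and] at h1 hi
    rw [h1, hi]
  · have h1 := hnmem i hi
    rw [hB] at h1
    rw [hA] at hi
    simp only [Finset.mem_filter, Finset.mem_univ, true_and] at h1 hi
    have := ht (π i)
    have := hu i
    omega

private lemma dvd_iff_mod (r j : ℕ) (hj : j < r) (n : ℕ) :
    r ∣ (n + r - j) ↔ n % r = j := by
  have hr : 0 < r := by omega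
  constructor
  · intro hdvd
    by_cases hjn : j ≤ n
    · have h1 : n + r - j = r + (n - j) := by omega
      rw [h1] at hdvd
      have h2 : r ∣ n - j := (Nat.dvd_add_right (dvd_refl r)).mp hdvd
      have h3 : j ≡ n [MOD r] := (Nat.modEq_iff_dvd' hjn).mpr h2
      calc n % r = j % r := h3.symm
        _ = j := Nat.mod_eq_of_lt hj
    · exfalso
      have h4 : n + r - j < r := by omega
      have h5 : 0 < n + r - j := by omega
      have h6 := Nat.eq_zero_of_dvd_of_lt hdvd h4
      omega
  · intro hmod
    have hjn : j ≤ n := by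
      have := Nat.mod_le n r
      omega
    have h3 : j ≡ n [MOD r] := by
      unfold Nat.ModEq
      rw [hmod, Nat.mod_eq_of_lt hj]
    have h2 : r ∣ n - j := (Nat.modEq_iff_dvd' hjn).mp h3
    have h1 : n + r - j = (n - j) + r := by omega
    rw [h1]
    exact dvd_add h2 dvd_rfl

private lemma range_count (r : ℕ) (hr : 0 < r) (j : ℕ) (hj : j < r) :
    ∀ n : ℕ, ((Finset.range n).filter (fun v => v % r = j)).card = (n + r - 1 - j) / r := by
  intro n
  induction n with
  | zero =>
    simp
    rw [Nat.div_eq_of_lt (by omega : r - 1 - j < r)]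
  | succ n ih =>
    rw [Finset.range_add_one, Finset.filter_insert]
    have harith : n + 1 + r - 1 - j = (n + r - 1 - j) + 1 := by omega
    have harith2 : (n + r - 1 - j) + 1 = n + r - j := by omega
    by_cases h : n % r = j
    · rw [if_pos h, Finset.card_insert_of_notMem (by simp), ih, harith,
        Nat.succ_div_of_dvd (by rw [harith2]; exact (dvd_iff_mod r j hj n).mpr h)]
    · rw [if_neg h, ih, harith,
        Nat.succ_div_of_not_dvd (by rw [harith2]; exact fun hd => h ((dvd_iff_mod r j hj n).mp hd))]

private lemma fin_count (n r : ℕ) (hr : 0 < r) (j : ℕ) (hj : j < r) :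
    ((univ : Finset (Fin n)).filter (fun v : Fin n => v.val % r = j)).card
      = (n + r - 1 - j) / r := by
  rw [← range_count r hr j hj n]
  refine Finset.card_bij (fun (a : Fin n) _ => (a : ℕ)) ?_ ?_ ?_
  · intro a ha
    simp only [Finset.mem_filter, Finset.mem_range, Finset.mem_univ, true_and] at ha ⊢
    exact ⟨a.isLt, ha⟩
  · intro a _ b _ h
    exact Fin.ext h
  · intro b hb
    simp only [Finset.mem_filter, Finset.mem_range] at hb
    exact ⟨⟨b, hb.1⟩, by simp [hb.2], rfl⟩

private lemma cParts_eq (hk : 3 ≤ k) {n : ℕ} (x : Fin (k-1) → ℕ)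
    (c : Fin n → Fin (k-1)) (a b : Fin n) (hab : a ≠ b)
    (π : Equiv.Perm (Fin (k-1))) (hk1 : 0 < k - 1)
    (hfib : ∀ i, (Finset.univ.filter (fun v => c v = π i)).card = x i)
    (hca : c a = π ⟨0, hk1⟩) (hcb : c b = π ⟨0, hk1⟩)
    (hx0 : 2 ≤ x ⟨0, hk1⟩) :
    cParts k x F = _root_.copyCount F (grG c a b) := by
  classical
  have hval : ∀ (i₀ : Fin (k-1)) (a' b' : Fin (x i₀)), (i₀ : ℕ) = 0 → a' ≠ b' →
      _root_.copyCount F (completeMultipartiteGraph (fun i => Fin (x i)) ⊔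
        fromEdgeSet {s(⟨i₀, a'⟩, ⟨i₀, b'⟩)}) = _root_.copyCount F (grG c a b) := by
    intro i₀ a' b' h0 hne
    have hi₀ : i₀ = ⟨0, hk1⟩ := Fin.ext h0
    have eFib : ∀ i : Fin (k-1), Fin (x i) ≃ {v : Fin n // c v = π i} := fun i =>
      Fintype.equivOfCardEq (by
        rw [Fintype.card_fin, Fintype.card_subtype]
        exact (hfib i).symm)
    set e3 : (Σ i : Fin (k-1), Fin (x i)) ≃ Fin n :=
      ((Equiv.sigmaCongrRight eFib).trans ((Equiv.sigmaCongrLeft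
        (β := fun j : Fin (k-1) => {v : Fin n // c v = j}) π).trans
          (Equiv.sigmaFiberEquiv c))) with he3
    have he3app : ∀ p : (Σ i : Fin (k-1), Fin (x i)), c (e3 p) = π p.1 := by
      rintro ⟨i, u⟩
      rw [he3]
      simp only [Equiv.trans_apply, Equiv.sigmaCongrRight_apply, Equiv.sigmaCongrLeft_apply,
        Equiv.sigmaFiberEquiv]
      exact (eFib i u).2
    set A' : (Σ i : Fin (k-1), Fin (x i)) := ⟨i₀, a'⟩ with hA'
    set B' : (Σ i : Fin (k-1), Fin (x i)) := ⟨i₀, b'⟩ with hB'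
    have hAB' : A' ≠ B' := by
      intro h
      apply hne
      rw [hA', hB'] at h
      exact eq_of_heq (Sigma.mk.inj_iff.mp h).2
    have hswapc : ∀ (u w z : Fin n), c u = c w → c (Equiv.swap u w z) = c z := by
      intro u w z hcuw
      by_cases hz : z = u
      · rw [hz, Equiv.swap_apply_left, ← hcuw]
      · by_cases hz' : z = w
        · rw [hz', Equiv.swap_apply_right, hcuw]
        · rw [Equiv.swap_apply_of_ne_of_ne hz hz']
    set u1 := e3 A' with hu1
    have hcA : c u1 = π i₀ := he3app A'
    have hu1a : c u1 = c a := by rw [hcA, hi₀, hca]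
    set e4 := e3.trans (Equiv.swap u1 a) with he4
    have he4app : ∀ p, c (e4 p) = π p.1 := by
      intro p
      rw [he4]
      simp only [Equiv.trans_apply]
      rw [hswapc u1 a _ hu1a]
      exact he3app p
    have he4A : e4 A' = a := by
      rw [he4]
      simp only [Equiv.trans_apply, ← hu1]
      exact Equiv.swap_apply_left u1 a
    set u2 := e4 B' with hu2
    have hcB : c u2 = c b := by
      rw [hu2, he4app B']
      show π i₀ = c b
      rw [hi₀, hcb]
    have hu2a : u2 ≠ a := by
      rw [hu2, ← he4A]
      exact fun h => hAB' (e4.injective h).symm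
    set e5 := e4.trans (Equiv.swap u2 b) with he5
    have he5app : ∀ p, c (e5 p) = π p.1 := by
      intro p
      rw [he5]
      simp only [Equiv.trans_apply]
      rw [hswapc u2 b _ hcB]
      exact he4app p
    have he5A : e5 A' = a := by
      rw [he5]
      simp only [Equiv.trans_apply]
      rw [he4A]
      exact Equiv.swap_apply_of_ne_of_ne (Ne.symm hu2a) hab
    have he5B : e5 B' = b := by
      rw [he5]
      simp only [Equiv.trans_apply, ← hu2]
      exact Equiv.swap_apply_left u2 b
    refine (copyCount_iso (G := completeMultipartiteGraph (fun i => Fin (x i)) ⊔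
        fromEdgeSet {s(A', B')}) (G' := grG c a b) ⟨e5, ?_⟩)
    intro p q
    rw [grG_adj]
    simp only [SimpleGraph.sup_adj, SimpleGraph.comap_adj, SimpleGraph.top_adj,
      SimpleGraph.fromEdgeSet_adj, Set.mem_singleton_iff]
    rw [he5app p, he5app q]
    have h1 : π p.1 ≠ π q.1 ↔ p.1 ≠ q.1 := π.injective.ne_iff
    have h2 : e5 p ≠ e5 q ↔ p ≠ q := e5.injective.ne_iff
    have h3 : s(e5 p, e5 q) = s(a, b) ↔ s(p, q) = s(A', B') := by
      rw [← he5A, ← he5B, Sym2.eq_iff, Sym2.eq_iff]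
      rw [e5.injective.eq_iff, e5.injective.eq_iff, e5.injective.eq_iff, e5.injective.eq_iff]
    rw [h1, h2, h3]
  have hne01 : (⟨0, by omega⟩ : Fin (x ⟨0, hk1⟩)) ≠ ⟨1, by omega⟩ := by
    intro h
    have := congrArg Fin.val h
    simp at this
  apply le_antisymm
  · apply Nat.sInf_le
    exact ⟨⟨0, hk1⟩, ⟨0, by omega⟩, ⟨1, by omega⟩, rfl, hne01,
      (hval ⟨0, hk1⟩ ⟨0, by omega⟩ ⟨1, by omega⟩ rfl hne01).symm⟩
  · refine le_csInf ⟨_, ⟨⟨0, hk1⟩, ⟨0, by omega⟩, ⟨1, by omega⟩, rfl, hne01, rfl⟩⟩ ?_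
    rintro v ⟨i₀, a', b', h0, hne, rfl⟩
    exact (hval i₀ a' b' h0 hne).ge
end Core


set_option maxHeartbeats 2000000 in
/-- if all part sizes are within `d` of balanced, then
`c(x₁,…,x_{k-1},F) ≥ c(n,F) - γ_F·d·n^{f-3}`. -/
theorem stmt_12 {α : Type*} [Fintype α] (k f : ℕ) (F : SimpleGraph α)
    (hk : 3 ≤ k) (hF : IsCritical k F) (hf : Fintype.card α = f) :
    ∃ γ : ℝ, 0 < γ ∧ ∃ n₀ : ℕ, ∀ n ≥ n₀, ∀ d : ℕ,
      (d : ℝ) ≤ (n : ℝ) / (3 * ((k : ℝ) - 1)) →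
      ∀ x : Fin (k - 1) → ℕ, (∑ i, x i) = n →
        (∀ i, n / (k - 1) - d ≤ x i ∧ x i ≤ (n + k - 2) / (k - 1) + d) →
        (cnF k n F : ℝ) - γ * d * (n : ℝ) ^ (f - 3) ≤ cParts k x F := by
  classical
  obtain ⟨hχ, -⟩ := hF
  have hk1 : 0 < k - 1 := by omega
  refine ⟨((2 * (k-1) * 2^(f*f) : ℕ) : ℝ) + 1, by positivity, 3 * k, ?_⟩
  intro n hn d hd x hsum hbounds
  have hdn : 3 * (k-1) * d ≤ n := by
    have h3 : (0:ℝ) < 3 * ((k:ℝ) - 1) := by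
      have : (3:ℝ) ≤ (k:ℝ) := by exact_mod_cast hk
      nlinarith
    have h4 : (d:ℝ) * (3 * ((k:ℝ) - 1)) ≤ n := (le_div_iff₀ h3).mp hd
    have h5 : ((3 * (k-1) * d : ℕ) : ℝ) ≤ (n:ℝ) := by
      push_cast [Nat.cast_sub (by omega : 1 ≤ k)]
      nlinarith [h4]
    exact_mod_cast h5
  set c₀ : Fin n → Fin (k-1) := fun v => ⟨v.val % (k-1), Nat.mod_lt _ hk1⟩ with hc₀
  have htb : ∀ j : Fin (k-1), n/(k-1) ≤ (univ.filter (fun v => c₀ v = j)).card ∧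
      (univ.filter (fun v => c₀ v = j)).card ≤ n/(k-1) + 1 := by
    intro j
    have he : (univ.filter (fun v => c₀ v = j))
        = (univ.filter (fun v : Fin n => v.val % (k-1) = j.val)) := by
      refine Finset.filter_congr (fun v _ => ?_)
      constructor
      · intro h; exact congrArg Fin.val h
      · intro h; exact Fin.ext h
    rw [he, fin_count n (k-1) hk1 j.val j.isLt]
    constructor
    · exact Nat.div_le_div_right (by omega)
    · calc (n + (k-1) - 1 - j.val) / (k-1) ≤ (n + (k-1)) / (k-1) :=
          Nat.div_le_div_right (by omega)
        _ = n / (k-1) + 1 := Nat.add_div_right n hk1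
  have htsum : ∑ j, (univ.filter (fun v => c₀ v = j)).card = n := by
    have h1 := Finset.card_eq_sum_card_fiberwise
      (fun (v : Fin n) (_ : v ∈ univ) => Finset.mem_univ (c₀ v))
    rw [Finset.card_univ, Fintype.card_fin] at h1
    exact h1.symm
  have hceil : (n + k - 2) / (k-1) ≤ n/(k-1) + 1 := by
    calc (n + k - 2)/(k-1) ≤ (n + (k-1))/(k-1) := Nat.div_le_div_right (by omega)
      _ = n/(k-1) + 1 := Nat.add_div_right n hk1
  have hxub : ∀ i, x i ≤ n/(k-1) + 1 + d := by
    intro i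
    have h1 := (hbounds i).2
    omega
  have hπ : ∃ π : Equiv.Perm (Fin (k-1)),
      ∑ j, (x (π.symm j) - (univ.filter (fun v => c₀ v = j)).card) ≤ 2*(k-1)*d := by
    by_cases hd0 : d = 0
    · subst hd0
      obtain ⟨π, hπ⟩ := exists_perm x (fun j => (univ.filter (fun v => c₀ v = j)).card)
        (n/(k-1))
        (fun i => by have h1 := (hbounds i).1; have h2 := hxub i; omega)
        (fun i => htb i)
        (by rw [hsum, htsum])
      refine ⟨π, ?_⟩
      have hz : ∀ j, x (π.symm j) - (univ.filter (fun v => c₀ v = j)).card = 0 := by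
        intro j
        have h1 := hπ (π.symm j)
        rw [Equiv.apply_symm_apply] at h1
        omega
      rw [Finset.sum_congr rfl (fun j _ => hz j)]
      simp
    · refine ⟨Equiv.refl _, ?_⟩
      have hterm : ∀ j : Fin (k-1),
          x ((Equiv.refl (Fin (k-1))).symm j) - (univ.filter (fun v => c₀ v = j)).card
            ≤ d + 1 := by
        intro j
        simp only [Equiv.refl_symm, Equiv.refl_apply]
        have h1 := hxub j
        have h2 := (htb j).1
        omega
      calc ∑ j, (x ((Equiv.refl (Fin (k-1))).symm j)
            - (univ.filter (fun v => c₀ v = j)).card)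
          ≤ ∑ _j : Fin (k-1), (d+1) := Finset.sum_le_sum (fun j _ => hterm j)
        _ = (k-1) * (d+1) := by
            rw [Finset.sum_const, Finset.card_univ, Fintype.card_fin, smul_eq_mul]
        _ ≤ 2*(k-1)*d := by
            have : 2*(k-1)*d = (k-1)*(2*d) := by ring
            rw [this]
            exact Nat.mul_le_mul_left _ (by omega)
  obtain ⟨π, hπm⟩ := hπ
  set y : Fin (k-1) → ℕ := fun j => x (π.symm j) with hy
  have hysum : ∑ j, y j = Fintype.card (Fin n) := by
    rw [Fintype.card_fin, ← hsum]
    exact Equiv.sum_comp π.symm x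
  have hr0lt : (π ⟨0,hk1⟩ : ℕ) < k - 1 := (π ⟨0,hk1⟩).isLt
  set a : Fin n := ⟨(π ⟨0,hk1⟩ : ℕ), by omega⟩ with ha
  set b : Fin n := ⟨(π ⟨0,hk1⟩ : ℕ) + (k-1), by omega⟩ with hb
  have hab : a ≠ b := by
    intro h
    have h1 := congrArg Fin.val h
    rw [ha, hb] at h1
    simp at h1
    omega
  have hc₀a : c₀ a = π ⟨0,hk1⟩ := by
    apply Fin.ext
    show a.val % (k-1) = (π ⟨0, hk1⟩).val
    rw [ha]
    exact Nat.mod_eq_of_lt hr0lt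
  have hc₀b : c₀ b = π ⟨0,hk1⟩ := by
    apply Fin.ext
    show b.val % (k-1) = (π ⟨0, hk1⟩).val
    rw [hb]
    show ((π ⟨0,hk1⟩ : ℕ) + (k-1)) % (k-1) = (π ⟨0, hk1⟩).val
    rw [Nat.add_mod_right]
    exact Nat.mod_eq_of_lt hr0lt
  have hx0 : 2 ≤ x ⟨0, hk1⟩ := by
    have h1 := (hbounds ⟨0,hk1⟩).1
    have h2 : 3 * d ≤ n / (k-1) := by
      rw [Nat.le_div_iff_mul_le hk1]
      have h3 : 3*d*(k-1) = 3*(k-1)*d := by ring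
      rw [h3]
      exact hdn
    have h4 : 2 ≤ n / (k-1) := by
      rw [Nat.le_div_iff_mul_le hk1]
      omega
    omega
  set P : Finset (Fin n) := {a, b} with hP
  have hyr0 : y (π ⟨0,hk1⟩) = x ⟨0,hk1⟩ := by
    rw [hy]
    simp
  have hPcond : ∀ j, ((P.filter (fun v => c₀ v = j)).card ≤ y j) := by
    intro j
    by_cases hj : j = π ⟨0,hk1⟩
    · subst hj
      have hcard := Finset.card_filter_le P (fun v => c₀ v = π ⟨0,hk1⟩)
      have hPc : P.card ≤ 2 := by
        rw [hP]
        exact (Finset.card_insert_le a {b}).trans (by simp)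
      omega
    · have hemp : P.filter (fun v => c₀ v = j) = ∅ := by
        rw [Finset.filter_eq_empty_iff]
        intro v hv
        rw [hP] at hv
        simp only [Finset.mem_insert, Finset.mem_singleton] at hv
        rcases hv with rfl | rfl
        · rw [hc₀a]; exact fun h => hj h.symm
        · rw [hc₀b]; exact fun h => hj h.symm
      rw [hemp]
      simp
  obtain ⟨c, hcfib, hcP, hcdiff⟩ := exists_coloring P y
    (∑ j, (y j - (univ.filter (fun v => c₀ v = j)).card)) c₀ hysum hPcond rfl
  have hca : c a = π ⟨0,hk1⟩ := by
    rw [hcP a (by rw [hP]; simp), hc₀a]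
  have hcb : c b = π ⟨0,hk1⟩ := by
    rw [hcP b (by rw [hP]; simp), hc₀b]
  have hfib' : ∀ i, (univ.filter (fun v => c v = π i)).card = x i := by
    intro i
    rw [hcfib (π i), hy]
    simp
  have hEq := cParts_eq (F := F) hk x c a b hab π hk1 hfib' hca hcb hx0
  have hsteps := steps hχ hk hf hab (univ.filter (fun v => c v ≠ c₀ v))
    (by simp only [Finset.mem_filter, Finset.mem_univ, true_and, not_not]
        rw [hca, hc₀a])
    (by simp only [Finset.mem_filter, Finset.mem_univ, true_and, not_not]
        rw [hcb, hc₀b])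
    c c₀ (hca.trans hcb.symm)
    (fun v hv => by
      simp only [Finset.mem_filter, Finset.mem_univ, true_and, not_not] at hv
      exact hv)
  have hTuran : turanGraph n (k-1) = SimpleGraph.comap c₀ ⊤ := by
    ext u v
    simp [turanGraph, SimpleGraph.comap_adj, SimpleGraph.top_adj, hc₀, Fin.ext_iff]
  have hcnF : cnF k n F ≤ _root_.copyCount F (grG c₀ a b) := by
    apply Nat.sInf_le
    refine ⟨a, b, hab, ?_, ?_⟩
    · intro hadj
      rw [hTuran] at hadj
      simp only [SimpleGraph.comap_adj, SimpleGraph.top_adj] at hadj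
      exact hadj (by rw [hc₀a, hc₀b])
    · rw [hTuran]
      rfl
  have hdle : (univ.filter (fun v => c v ≠ c₀ v)).card ≤ 2*(k-1)*d :=
    le_trans hcdiff hπm
  have hchain : cnF k n F ≤ cParts k x F + (2*(k-1)*d) * (2^(f*f) * n^(f-3)) := by
    calc cnF k n F ≤ _root_.copyCount F (grG c₀ a b) := hcnF
      _ ≤ _root_.copyCount F (grG c a b)
          + (univ.filter (fun v => c v ≠ c₀ v)).card * (2^(f*f) * n^(f-3)) := hsteps
      _ ≤ _root_.copyCount F (grG c a b) + (2*(k-1)*d) * (2^(f*f) * n^(f-3)) :=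
          Nat.add_le_add_left (Nat.mul_le_mul_right _ hdle) _
      _ = cParts k x F + (2*(k-1)*d) * (2^(f*f) * n^(f-3)) := by rw [hEq]
  have hCnat : (2*(k-1)*d) * (2^(f*f) * n^(f-3)) = (2*(k-1)*2^(f*f)) * d * n^(f-3) := by
    ring
  rw [hCnat] at hchain
  have hcast : (cnF k n F : ℝ) ≤ (cParts k x F : ℝ)
      + ((2*(k-1)*2^(f*f) : ℕ) : ℝ) * (d:ℝ) * ((n:ℝ))^(f-3) := by
    have h1 : (cnF k n F : ℝ) ≤ ((cParts k x F + (2*(k-1)*2^(f*f)) * d * n^(f-3) : ℕ) : ℝ) := by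
      exact_mod_cast hchain
    push_cast at h1
    convert h1 using 2
    push_cast
    ring
  have hnn : (0:ℝ) ≤ (d:ℝ) * ((n:ℝ))^(f-3) := by positivity
  nlinarith [hcast, hnn]
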